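/- Any finite sequence of n integers can be partitioned into at most 2·⌈√n⌉ disjoint monotonic subsequences. -/

import Mathlib

open Function Finset

namespace MyES
theorem erdos_szekeres {α : Type*} [LinearOrder α] {r s n : ℕ} {f : Fin n → α}
    (hn : r * s < n) (hf : Injective f) :
    (∃ t : Finset (Fin n), r < #t ∧ StrictMonoOn f ↑t) ∨
      ∃ t : Finset (Fin n), s < #t ∧ StrictAntiOn f ↑t := by
  -- Given an index `i`, produce the set of increasing (resp., decreasing) subsequences which ends
  -- at `i`.
  let inc_sequences_ending_in : Fin n → Finset (Finset (Fin n)) := fun i =>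
    univ.powerset.filter fun t => Finset.max t = i ∧ StrictMonoOn f ↑t
  let dec_sequences_ending_in : Fin n → Finset (Finset (Fin n)) := fun i =>
    univ.powerset.filter fun t => Finset.max t = i ∧ StrictAntiOn f ↑t
  -- The singleton sequence is in both of the above collections.
  -- (This is useful to show that the maximum length subsequence is at least 1, and that the set
  -- of subsequences is nonempty.)
  have inc_i : ∀ i, {i} ∈ inc_sequences_ending_in i := fun i => by
    simp [inc_sequences_ending_in, StrictMonoOn]
  have dec_i : ∀ i, {i} ∈ dec_sequences_ending_in i := fun i => by
    simp [dec_sequences_ending_in, StrictAntiOn]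
  -- Define the pair of labels: at index `i`, the pair is the maximum length of an increasing
  -- subsequence ending at `i`, paired with the maximum length of a decreasing subsequence ending
  -- at `i`.
  -- We call these labels `(a_i, b_i)`.
  let ab' : Fin n → ℕ × ℕ := by
    intro i
    apply
      (max' ((inc_sequences_ending_in i).image card) (Nonempty.image ⟨{i}, inc_i i⟩ _),
        max' ((dec_sequences_ending_in i).image card) (Nonempty.image ⟨{i}, dec_i i⟩ _))
  -- Porting note: it costs many resources to unfold `ab'` so we obscure the definition:
  generalize hab : ab' = ab
  -- It now suffices to show that one of the labels is 'big' somewhere. In particular, if the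
  -- first in the pair is more than `r` somewhere, then we have an increasing subsequence in our
  -- set, and if the second is more than `s` somewhere, then we have a decreasing subsequence.
  rsuffices ⟨i, hi⟩ : ∃ i, r < (ab i).1 ∨ s < (ab i).2
  · refine Or.imp ?_ ?_ hi
    on_goal 1 =>
      have : (ab i).1 ∈ image card (inc_sequences_ending_in i) := by
        simp only [← hab]; exact max'_mem _ (Nonempty.image ⟨{i}, inc_i i⟩ _)
    on_goal 2 =>
      have : (ab i).2 ∈ image card (dec_sequences_ending_in i) := by
        simp only [← hab]; exact max'_mem _ (Nonempty.image ⟨{i}, dec_i i⟩ _)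
    all_goals
      intro hi
      rw [mem_image] at this
      obtain ⟨t, ht₁, ht₂⟩ := this
      refine ⟨t, by rwa [ht₂], ?_⟩
      rw [mem_filter] at ht₁
      apply ht₁.2.2
  -- Show first that the pair of labels is unique.
  have : Injective ab := by
    simp only [← hab]
    apply Function.Injective.of_lt_imp_ne
    intro i j k q
    injection q with q₁ q₂
    -- We have two cases: `f i < f j` or `f j < f i`.
    -- In the former we'll show `a_i < a_j`, and in the latter we'll show `b_i < b_j`.
    cases lt_or_gt_of_ne fun _ => ne_of_lt ‹i < j› (hf ‹f i = f j›)
    on_goal 1 =>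
      apply ne_of_lt _ q₁
      have : (ab' i).1 ∈ image card (inc_sequences_ending_in i) := by exact max'_mem _ (Nonempty.image ⟨{i}, inc_i i⟩ _)
    on_goal 2 =>
      apply ne_of_lt _ q₂
      have : (ab' i).2 ∈ image card (dec_sequences_ending_in i) := by exact max'_mem _ (Nonempty.image ⟨{i}, dec_i i⟩ _)
    all_goals
      -- Reduce to showing there is a subsequence of length `a_i + 1` which ends at `j`.
      rw [Nat.lt_iff_add_one_le]
      apply le_max'
      rw [mem_image] at this ⊢
      -- In particular we take the subsequence `t` of length `a_i` which ends at `i`, by definition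
      -- of `a_i`
      rcases this with ⟨t, ht₁, ht₂⟩
      rw [mem_filter] at ht₁
      -- Ensure `t` ends at `i`.
      have : t.max = i := by simp only [ht₁.2.1]
      -- Now our new subsequence is given by adding `j` at the end of `t`.
      refine ⟨insert j t, ?_, ?_⟩
      -- First make sure it's valid, i.e., that this subsequence ends at `j` and is increasing
      · rw [mem_filter]
        refine ⟨?_, ?_, ?_⟩
        · rw [mem_powerset]; apply subset_univ
        -- It ends at `j` since `i < j`.
        · convert max_insert (a := j) (s := t)
          rw [ht₁.2.1, max_eq_left]
          apply WithBot.coe_le_coe.mpr (le_of_lt ‹i < j›)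
        -- To show it's increasing (i.e., `f` is monotone increasing on `t.insert j`), we do cases
        -- on what the possibilities could be - either in `t` or equals `j`.
        simp only [StrictMonoOn, StrictAntiOn, coe_insert, Set.mem_insert_iff, mem_coe]
        -- Most of the cases are just bashes.
        rintro x ⟨rfl | _⟩ y ⟨rfl | _⟩ _
        · apply (irrefl _ ‹j < j›).elim
        · exfalso
          apply not_le_of_gt (_root_.trans ‹i < j› ‹j < y›) (le_max_of_eq ‹y ∈ t› ‹t.max = i›)
        · first
          | apply lt_of_le_of_lt _ ‹f i < f j›
          | apply lt_of_lt_of_le ‹f j < f i› _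
          rcases lt_or_eq_of_le (le_max_of_eq ‹x ∈ t› ‹t.max = i›) with (_ | rfl)
          · apply le_of_lt (ht₁.2.2 ‹x ∈ t› (mem_of_max ‹t.max = i›) ‹x < i›)
          · rfl
        · apply ht₁.2.2 ‹x ∈ t› ‹y ∈ t› ‹x < y›
      -- Finally show that this new subsequence is one longer than the old one.
      · rw [card_insert_of_notMem, ht₂]
        intro
        apply not_le_of_gt ‹i < j› (le_max_of_eq ‹j ∈ t› ‹t.max = i›)
  -- Finished both goals!
  -- Now that we have uniqueness of each label, it remains to do some counting to finish off.
  -- Suppose all the labels are small.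
  by_contra! q
  -- Then the labels `(a_i, b_i)` all fit in the following set: `{ (x,y) | 1 ≤ x ≤ r, 1 ≤ y ≤ s }`
  let ran : Finset (ℕ × ℕ) := (range r).image Nat.succ ×ˢ (range s).image Nat.succ
  -- which we prove here.
  have : image ab univ ⊆ ran := by
    -- First some logical shuffling
    rintro ⟨x₁, x₂⟩
    simp only [ran, mem_image, exists_prop, mem_range, mem_univ, mem_product, true_and,
      Prod.ext_iff]
    rintro ⟨i, rfl, rfl⟩
    specialize q i
    -- Show `1 ≤ a_i` and `1 ≤ b_i`, which is easy from the fact that `{i}` is an increasing and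
    -- decreasing subsequence which we did right near the top.
    have z : 1 ≤ (ab i).1 ∧ 1 ≤ (ab i).2 := by
      simp only [← hab]
      constructor <;>
        · apply le_max'
          rw [mem_image]
          exact ⟨{i}, by solve_by_elim, card_singleton i⟩
    -- Need to get `a_i ≤ r`, here phrased as: there is some `a < r` with `a+1 = a_i`.
    exact ⟨⟨(ab i).1 - 1, by omega⟩, (ab i).2 - 1, by omega⟩
  -- To get our contradiction, it suffices to prove `n ≤ r * s`
  apply not_le_of_gt hn
  -- Which follows from considering the cardinalities of the subset above, since `ab` is injective.
  simpa [ran, Nat.succ_injective, card_image_of_injective, ‹Injective ab›] using card_le_card this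

end MyES

lemma myExtract {n : ℕ} (a : Fin n → ℤ) (s : Finset (Fin n)) (k : ℕ) (h : k * k < s.card) :
    ∃ t : Finset (Fin n), t ⊆ s ∧ k < t.card ∧ (MonotoneOn a ↑t ∨ AntitoneOn a ↑t) := by
  set e := s.orderIsoOfFin rfl with he
  set g : Fin s.card → ℤ ×ₗ (Fin n) := fun j => toLex (a ((e j : Fin n)), (e j : Fin n)) with hgdef
  have hcoe : Function.Injective fun j : Fin s.card => (e j : Fin n) := fun x y hxy =>
    e.injective (Subtype.ext hxy)
  have hg : Function.Injective g := by
    intro x y hxy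
    have : ((e x : Fin n)) = (e y : Fin n) := congrArg (fun z => (ofLex z).2) hxy
    exact hcoe this
  have hlt : ∀ {j₁ j₂ : Fin s.card}, (e j₁ : Fin n) < (e j₂ : Fin n) → j₁ < j₂ := by
    intro j₁ j₂ hj
    exact e.lt_iff_lt.mp (Subtype.coe_lt_coe.mp hj)
  have hlt' : ∀ {j₁ j₂ : Fin s.card}, j₁ < j₂ → (e j₁ : Fin n) < (e j₂ : Fin n) := by
    intro j₁ j₂ hj
    exact Subtype.coe_lt_coe.mpr (e.lt_iff_lt.mpr hj)
  rcases MyES.erdos_szekeres (r := k) (s := k) h hg with ⟨t', ht', hm⟩ | ⟨t', ht', hm⟩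
  · refine ⟨t'.image (fun j => (e j : Fin n)), ?_, ?_, Or.inl ?_⟩
    · intro x hx
      rcases Finset.mem_image.mp hx with ⟨j, _, rfl⟩
      exact (e j).2
    · rwa [Finset.card_image_of_injective _ hcoe]
    · intro x hx y hy hxy
      rcases Finset.mem_image.mp (Finset.mem_coe.mp hx) with ⟨j₁, hj₁, rfl⟩
      rcases Finset.mem_image.mp (Finset.mem_coe.mp hy) with ⟨j₂, hj₂, rfl⟩
      rcases eq_or_lt_of_le hxy with heq | hh
      · exact le_of_eq (congrArg a heq)
      · have := hm hj₁ hj₂ (hlt hh)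
        rcases Prod.Lex.lt_iff.mp this with h1 | ⟨h1, _⟩
        · exact le_of_lt h1
        · exact le_of_eq h1
  · refine ⟨t'.image (fun j => (e j : Fin n)), ?_, ?_, Or.inr ?_⟩
    · intro x hx
      rcases Finset.mem_image.mp hx with ⟨j, _, rfl⟩
      exact (e j).2
    · rwa [Finset.card_image_of_injective _ hcoe]
    · intro x hx y hy hxy
      rcases Finset.mem_image.mp (Finset.mem_coe.mp hx) with ⟨j₁, hj₁, rfl⟩
      rcases Finset.mem_image.mp (Finset.mem_coe.mp hy) with ⟨j₂, hj₂, rfl⟩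
      rcases eq_or_lt_of_le hxy with heq | hh
      · exact le_of_eq (congrArg a heq).symm
      · have := hm hj₁ hj₂ (hlt hh)
        rcases Prod.Lex.lt_iff.mp this with h1 | ⟨h1, h2⟩
        · exact le_of_lt h1
        · exact absurd hh (not_lt.mpr (le_of_lt h2))

def myQ {n : ℕ} (a : Fin n → ℤ) (s : Finset (Fin n)) (m : ℕ) : Prop :=
  ∃ f : Fin n → ℕ, (∀ i ∈ s, f i < m) ∧
    ∀ p : ℕ, MonotoneOn a {i | i ∈ s ∧ f i = p} ∨ AntitoneOn a {i | i ∈ s ∧ f i = p}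

lemma myQ_mono {n : ℕ} (a : Fin n → ℤ) (s : Finset (Fin n)) {m m' : ℕ} (h : m ≤ m')
    (hq : myQ a s m) : myQ a s m' := by
  obtain ⟨f, hf1, hf2⟩ := hq
  exact ⟨f, fun i hi => lt_of_lt_of_le (hf1 i hi) h, hf2⟩

lemma myQ_empty {n : ℕ} (a : Fin n → ℤ) (m : ℕ) : myQ a ∅ m := by
  refine ⟨fun _ => 0, by simp, fun p => Or.inl ?_⟩
  intro x hx
  simp at hx

lemma myQ_step {n : ℕ} (a : Fin n → ℤ) (s t : Finset (Fin n)) (m : ℕ) (hts : t ⊆ s)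
    (hmono : MonotoneOn a ↑t ∨ AntitoneOn a ↑t) (hq : myQ a (s \ t) m) : myQ a s (m + 1) := by
  obtain ⟨f, hf1, hf2⟩ := hq
  refine ⟨fun i => if i ∈ t then m else f i, ?_, ?_⟩
  · intro i hi
    by_cases hit : i ∈ t
    · simp [hit]
    · simp only [hit, if_neg, if_false]
      exact lt_trans (hf1 i (Finset.mem_sdiff.mpr ⟨hi, hit⟩)) (Nat.lt_succ_self m)
  · intro p
    by_cases hpm : p = m
    · have hset : {i | i ∈ s ∧ (if i ∈ t then m else f i) = p} = (t : Set (Fin n)) := by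
        ext i
        simp only [Set.mem_setOf_eq, Finset.mem_coe]
        constructor
        · rintro ⟨his, hif⟩
          by_contra hit
          rw [if_neg hit] at hif
          exact absurd (hpm ▸ hif) (Nat.ne_of_lt (hf1 i (Finset.mem_sdiff.mpr ⟨his, hit⟩)))
        · intro hit
          refine ⟨hts hit, ?_⟩
          rw [if_pos hit]
          exact hpm.symm
      rw [hset]
      exact hmono
    · have hset : {i | i ∈ s ∧ (if i ∈ t then m else f i) = p}
          = {i | i ∈ s \ t ∧ f i = p} := by
        ext i
        simp only [Set.mem_setOf_eq, Finset.mem_sdiff]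
        constructor
        · rintro ⟨his, hif⟩
          have hit : i ∉ t := by
            intro hit
            rw [if_pos hit] at hif
            exact hpm hif.symm
          rw [if_neg hit] at hif
          exact ⟨⟨his, hit⟩, hif⟩
        · rintro ⟨⟨his, hit⟩, hif⟩
          exact ⟨his, by rw [if_neg hit]; exact hif⟩
      rw [hset]
      exact hf2 p

lemma myQ_subsingleton {n : ℕ} (a : Fin n → ℤ) (s : Finset (Fin n)) (h : s.card ≤ 1) :
    myQ a s 1 := by
  refine ⟨fun _ => 0, by simp, fun p => Or.inl ?_⟩
  intro x hx y hy _
  have := Finset.card_le_one.mp h x hx.1 y hy.1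
  exact le_of_eq (congrArg a this)

lemma myMain {n : ℕ} (a : Fin n → ℤ) :
    ∀ N : ℕ, ∀ s : Finset (Fin n), s.card ≤ N → ∀ k : ℕ,
      (s.card ≤ k * (k + 1) → myQ a s (2 * k)) ∧
      (s.card ≤ (k + 1) * (k + 1) → myQ a s (2 * k + 1)) := by
  intro N
  induction N with
  | zero =>
    intro s hs k
    have : s = ∅ := Finset.card_eq_zero.mp (Nat.le_zero.mp hs)
    subst this
    exact ⟨fun _ => myQ_empty a _, fun _ => myQ_empty a _⟩
  | succ N ih =>
    intro s hs k
    induction k with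
    | zero =>
      constructor
      · intro hc
        have : s = ∅ := Finset.card_eq_zero.mp (by omega)
        subst this
        exact myQ_empty a _
      · intro hc
        simpa using myQ_subsingleton a s (by omega)
    | succ k ihk =>
      have stepA : s.card ≤ (k + 1) * (k + 2) → myQ a s (2 * (k + 1)) := by
        intro hc
        by_cases hbig : (k + 1) * (k + 1) < s.card
        · obtain ⟨t, hts, htc, hmono⟩ := myExtract a s (k + 1) hbig
          have hadd : (s \ t).card + t.card = s.card := Finset.card_sdiff_add_card_eq_card hts
          have h1 : (s \ t).card ≤ N := by omega
          have h2 : (s \ t).card ≤ (k + 1) * (k + 1) := by nlinarith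
          have := (ih (s \ t) h1 k).2 h2
          have := myQ_step a s t (2 * k + 1) hts hmono this
          exact myQ_mono a s (by omega) this
        · have := ihk.2 (by omega)
          exact myQ_mono a s (by omega) this
      refine ⟨stepA, ?_⟩
      intro hc
      by_cases hbig : (k + 1) * (k + 2) < s.card
      · have hbig' : (k + 1) * (k + 1) < s.card := by nlinarith
        obtain ⟨t, hts, htc, hmono⟩ := myExtract a s (k + 1) hbig'
        have hadd : (s \ t).card + t.card = s.card := Finset.card_sdiff_add_card_eq_card hts
        have h1 : (s \ t).card ≤ N := by omega
        have h2 : (s \ t).card ≤ (k + 1) * (k + 2) := by nlinarith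
        have := (ih (s \ t) h1 (k + 1)).1 h2
        exact myQ_step a s t (2 * (k + 1)) hts hmono this
      · exact myQ_mono a s (by omega) (stepA (by omega))

theorem partition_into_monotone_subseqs (n : ℕ) (a : Fin n → ℤ) :
    ∃ (t : ℕ) (f : Fin n → Fin t), t ≤ 2 * ⌈Real.sqrt n⌉₊ ∧
      ∀ p : Fin t, MonotoneOn a {i | f i = p} ∨ AntitoneOn a {i | f i = p} := by
  set k := ⌈Real.sqrt n⌉₊ with hk
  rcases Nat.eq_zero_or_pos n with rfl | hn
  · exact ⟨0, Fin.elim0, Nat.zero_le _, fun p => p.elim0⟩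
  have hk1 : 1 ≤ k := by
    rw [hk]
    have : (1 : ℝ) ≤ Real.sqrt n := by
      rw [show (1:ℝ) = Real.sqrt 1 by simp]
      exact Real.sqrt_le_sqrt (by exact_mod_cast hn)
    exact Nat.one_le_iff_ne_zero.mpr (by
      intro h0
      have := Nat.ceil_eq_zero.mp h0
      linarith)
  have hnk : n ≤ k * k := by
    have h1 : Real.sqrt n ≤ (k : ℝ) := Nat.le_ceil _
    have h2 : (n : ℝ) ≤ (k : ℝ) * (k : ℝ) := by
      nlinarith [Real.sq_sqrt (show (0:ℝ) ≤ n by positivity), Real.sqrt_nonneg (n : ℝ)]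
    exact_mod_cast h2
  have hcard : (Finset.univ : Finset (Fin n)).card = n := Finset.card_univ.trans (Fintype.card_fin n)
  have hQ : myQ a Finset.univ (2 * (k - 1) + 1) :=
    (myMain a n Finset.univ (le_of_eq hcard) (k - 1)).2 (by
      rw [hcard]
      have : (k - 1 + 1) = k := by omega
      rw [this]
      exact hnk)
  have hQ' : myQ a Finset.univ (2 * k) := myQ_mono a _ (by omega) hQ
  obtain ⟨f, hf1, hf2⟩ := hQ'
  refine ⟨2 * k, fun i => ⟨f i, hf1 i (Finset.mem_univ i)⟩, le_refl _, ?_⟩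
  intro p
  have hset : {i : Fin n | (⟨f i, hf1 i (Finset.mem_univ i)⟩ : Fin (2 * k)) = p}
      = {i | i ∈ (Finset.univ : Finset (Fin n)) ∧ f i = (p : ℕ)} := by
    ext i
    simp [Fin.ext_iff]
  rw [hset]
  exact hf2 p
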